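/- Let ω > 0 and M ≥ 0. There exists N₂ = N₂(ω, M) > 0 such that for every x, e ∈ ℝ³ with ‖e‖ ≤ M and d_r(x) > N₂, setting v = F_ω(x) + e, for every ξ > 0 the traveled distance satisfies D_{x,v}^ω( 2·max{2, ξ} / (ω √(d_r(x))) ) ≥ ξ. -/

import Mathlib

noncomputable def vec3 (a b c : ℝ) : EuclideanSpace ℝ (Fin 3) := WithLp.toLp 2 ![a, b, c]

noncomputable def Frot (ω : ℝ) (y : EuclideanSpace ℝ (Fin 3)) : EuclideanSpace ℝ (Fin 3) :=
  vec3 (-ω * y 1) (ω * y 0) 0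

noncomputable def dr (x : EuclideanSpace ℝ (Fin 3)) : ℝ :=
  Real.sqrt (x 0 ^ 2 + x 1 ^ 2)

lemma norm_vec3 (a b c : ℝ) : ‖vec3 a b c‖ = Real.sqrt (a^2 + b^2 + c^2) := by
  rw [EuclideanSpace.norm_eq]
  simp [vec3, Fin.sum_univ_three, sq_abs]

lemma Frot_add (ω : ℝ) (y z : EuclideanSpace ℝ (Fin 3)) :
    Frot ω (y + z) = Frot ω y + Frot ω z := by
  ext i
  fin_cases i <;>
    simp [Frot, vec3, PiLp.add_apply] <;> ring

lemma Frot_smul (ω s : ℝ) (y : EuclideanSpace ℝ (Fin 3)) :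
    Frot ω (s • y) = s • Frot ω y := by
  ext i
  fin_cases i <;>
    simp [Frot, vec3, PiLp.smul_apply, smul_eq_mul] <;> ring

lemma norm_Frot (ω : ℝ) (hω : 0 ≤ ω) (y : EuclideanSpace ℝ (Fin 3)) :
    ‖Frot ω y‖ = ω * Real.sqrt (y 0 ^ 2 + y 1 ^ 2) := by
  rw [Frot, norm_vec3]
  rw [show (-ω * y 1)^2 + (ω * y 0)^2 + (0:ℝ)^2 = ω^2 * (y 0 ^2 + y 1 ^2) by ring]
  rw [Real.sqrt_mul (sq_nonneg ω), Real.sqrt_sq hω]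

lemma arith_key (ω M sr ξ : ℝ) (hω : 0 < ω) (hM : 0 ≤ M)
    (hsr : 1 + 8 * M / ω < sr) (hξ : 0 < ξ) :
    ω * (ω * (sr * sr) - M) * (2 * max 2 ξ / (ω * sr)) ^ 2 / 2
      - M * (2 * max 2 ξ / (ω * sr)) ≥ ξ := by
  set m := max 2 ξ with hm
  have hm2 : 2 ≤ m := le_max_left _ _
  have hmξ : ξ ≤ m := le_max_right _ _
  have hu : ω + 8 * M < ω * sr := by
    have := (mul_lt_mul_iff_right₀ hω).mpr hsr
    rw [mul_add, mul_one, mul_div_cancel₀ _ hω.ne'] at this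
    linarith
  have hsr1 : 1 < sr := by
    have : 0 ≤ 8 * M / ω := by positivity
    linarith
  have hωsr : 0 < ω * sr := by positivity
  have hm0 : 0 < m := by linarith
  have h2 : ω * (ω * (sr * sr) - M) * (2 * m / (ω * sr)) ^ 2 / 2 - M * (2 * m / (ω * sr))
      = (2 * m ^ 2 * ω * (ω * (sr * sr) - M) - 2 * m * M * (ω * sr)) / (ω * sr) ^ 2 := by
    field_simp
  rw [ge_iff_le, h2, le_div_iff₀ (by positivity)]
  have hωu : ω < ω * sr := by nlinarith
  have hMu : 8 * M < ω * sr := by nlinarith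
  have hmm : 2 * m ≤ m * m := by
    nlinarith [mul_nonneg (by linarith : (0:ℝ) ≤ m - 2) hm0.le]
  have h8 : 8 * (ω * M) < (ω * sr) * (ω * sr) := by
    nlinarith [mul_lt_mul_of_pos_left hMu hωsr, mul_le_mul_of_nonneg_right hωu.le hM]
  have h8' : 8 * (M * (ω * sr)) < (ω * sr) * (ω * sr) := by
    nlinarith [mul_lt_mul_of_pos_right hMu hωsr]
  have hA : m * m * ((ω * sr) * (ω * sr) - 8 * (ω * M)) > 0 :=
    mul_pos (mul_pos hm0 hm0) (by linarith)
  have hB : m * ((ω * sr) * (ω * sr) - 8 * (M * (ω * sr))) > 0 :=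
    mul_pos hm0 (by linarith)
  have hC : (m * m - 2 * ξ) * ((ω * sr) * (ω * sr)) ≥ 0 :=
    mul_nonneg (by linarith) (mul_pos hωsr hωsr).le
  have hD : (m * m - 2 * m) * ((ω * sr) * (ω * sr)) ≥ 0 :=
    mul_nonneg (by linarith) (mul_pos hωsr hωsr).le
  nlinarith [hA, hB, hC, hD]

lemma Frot_apply0 (ω : ℝ) (y : EuclideanSpace ℝ (Fin 3)) : Frot ω y 0 = -ω * y 1 := by
  simp [Frot, vec3]

lemma Frot_apply1 (ω : ℝ) (y : EuclideanSpace ℝ (Fin 3)) : Frot ω y 1 = ω * y 0 := by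
  simp [Frot, vec3]

noncomputable def Dtrav (ω : ℝ) (x v : EuclideanSpace ℝ (Fin 3)) (t : ℝ) : ℝ :=
  ∫ s in (0 : ℝ)..t, ‖v - Frot ω (x + s • v)‖

theorem stmt_7 (ω M : ℝ) (hω : 0 < ω) (hM : 0 ≤ M) :
    ∃ N₂ : ℝ, 0 < N₂ ∧
      ∀ x e : EuclideanSpace ℝ (Fin 3), ‖e‖ ≤ M → dr x > N₂ →
        ∀ ξ : ℝ, 0 < ξ →
          Dtrav ω x (Frot ω x + e) (2 * max 2 ξ / (ω * Real.sqrt (dr x))) ≥ ξ := by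
  refine ⟨(1 + 8 * M / ω) ^ 2, by positivity, ?_⟩
  intro x e he hdr ξ hξ
  set r := dr x with hr
  set sr := Real.sqrt r with hsrdef
  have hbase : (0:ℝ) < 1 + 8 * M / ω := by positivity
  have hr0 : 0 < r := lt_trans (by positivity) hdr
  have hsr : 1 + 8 * M / ω < sr := by
    have h := Real.sqrt_lt_sqrt (by positivity) hdr
    rwa [Real.sqrt_sq hbase.le] at h
  have hsr0 : 0 < sr := lt_trans hbase hsr
  have hrsq : r = sr * sr := (Real.mul_self_sqrt hr0.le).symm
  set v := Frot ω x + e with hv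
  set Fv := Frot ω v with hFvdef
  -- bound on ‖Fv‖
  have hnormE2 : Real.sqrt (e 0 ^ 2 + e 1 ^ 2) ≤ ‖e‖ := by
    rw [EuclideanSpace.norm_eq]
    apply Real.sqrt_le_sqrt
    simp [Fin.sum_univ_three, sq_abs]
    positivity
  have hFe : ‖Frot ω e‖ ≤ ω * M := by
    rw [norm_Frot ω hω.le]
    exact mul_le_mul_of_nonneg_left (le_trans hnormE2 he) hω.le
  have hFFx : ‖Frot ω (Frot ω x)‖ = ω * (ω * r) := by
    rw [norm_Frot ω hω.le, Frot_apply0, Frot_apply1]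
    rw [show (-ω * x 1) ^ 2 + (ω * x 0) ^ 2 = ω ^ 2 * (x 0 ^ 2 + x 1 ^ 2) by ring]
    rw [Real.sqrt_mul (sq_nonneg ω), Real.sqrt_sq hω.le, hr, dr]
  have hFv : ω * (ω * r - M) ≤ ‖Fv‖ := by
    have hsplit : Fv = Frot ω (Frot ω x) + Frot ω e := by
      rw [hFvdef, hv, Frot_add]
    have htri : ‖Frot ω (Frot ω x)‖ ≤ ‖Fv‖ + ‖Frot ω e‖ := by
      rw [hsplit]
      simpa using norm_add_le (Frot ω (Frot ω x) + Frot ω e) (-(Frot ω e))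
    rw [mul_sub]
    linarith [hFFx ▸ htri]
  -- rewrite the integrand
  have hkey : ∀ s : ℝ, v - Frot ω (x + s • v) = e - s • Fv := by
    intro s
    rw [Frot_add, Frot_smul, hFvdef, hv]
    abel
  set T := 2 * max 2 ξ / (ω * sr) with hT
  have hT0 : 0 ≤ T := by positivity
  set A := ω * (ω * r - M) with hA
  have hcont : Continuous fun s : ℝ => ‖e - s • Fv‖ :=
    (continuous_const.sub (continuous_id.smul continuous_const)).norm
  have hmono : (∫ s in (0:ℝ)..T, (s * A - M)) ≤ ∫ s in (0:ℝ)..T, ‖e - s • Fv‖ := by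
    apply intervalIntegral.integral_mono_on hT0
    · exact ((by fun_prop : Continuous fun s : ℝ => s * A - M)).intervalIntegrable _ _
    · exact hcont.intervalIntegrable _ _
    · intro s hs
      have h1 : s * A ≤ s * ‖Fv‖ := mul_le_mul_of_nonneg_left hFv hs.1
      have h2 : ‖s • Fv‖ = s * ‖Fv‖ := by
        rw [norm_smul, Real.norm_eq_abs, abs_of_nonneg hs.1]
      have h3 : ‖s • Fv‖ - ‖e‖ ≤ ‖e - s • Fv‖ := by
        rw [norm_sub_rev]
        exact norm_sub_norm_le _ _
      linarith
  have hval : (∫ s in (0:ℝ)..T, (s * A - M)) = A * T ^ 2 / 2 - M * T := by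
    rw [intervalIntegral.integral_sub
      (((by fun_prop : Continuous fun s : ℝ => s * A)).intervalIntegrable _ _)
      (intervalIntegrable_const)]
    rw [intervalIntegral.integral_mul_const A fun s => s, integral_id,
      intervalIntegral.integral_const, smul_eq_mul]
    ring
  have harith : A * T ^ 2 / 2 - M * T ≥ ξ := by
    rw [hA, hrsq, hT]
    have := arith_key ω M sr ξ hω hM hsr hξ
    linarith [this]
  have hD : Dtrav ω x v T = ∫ s in (0:ℝ)..T, ‖e - s • Fv‖ := by
    rw [Dtrav]
    congr 1
    ext s
    rw [hkey s]
  rw [hD]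
  linarith
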